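/- For D odd and N = D+2, the map X ↦ X + [1,D+1] (symmetric difference with [1,D+1]) is a fixed-point-free involution of E_N which preserves membership of N, and it maps {X ∈ E_N : N ∉ X, γ(X) = t} bijectively onto {X ∈ E_N : N ∉ X, γ(X) = −t} for every even integer t. -/
import Mathlib

def gam (X : Finset ℕ) : ℤ :=
  ((X.filter (fun x => x % 2 = 0)).card : ℤ) - ((X.filter (fun x => x % 2 = 1)).card : ℤ)

lemma gam_union (A B : Finset ℕ) (h : Disjoint A B) : gam (A ∪ B) = gam A + gam B := by
  unfold gam
  rw [Finset.filter_union, Finset.filter_union,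
    Finset.card_union_of_disjoint (h.mono (Finset.filter_subset _ _) (Finset.filter_subset _ _)),
    Finset.card_union_of_disjoint (h.mono (Finset.filter_subset _ _) (Finset.filter_subset _ _))]
  push_cast; ring

lemma gam_Icc (m : ℕ) : gam (Finset.Icc 1 (2 * m)) = 0 := by
  induction m with
  | zero => simp [gam]
  | succ m ih =>
    have he : Finset.Icc 1 (2 * (m + 1)) = Finset.Icc 1 (2 * m) ∪ {2 * m + 1, 2 * m + 2} := by
      ext x; simp [Finset.mem_Icc]; omega
    have hd : Disjoint (Finset.Icc 1 (2 * m)) ({2 * m + 1, 2 * m + 2} : Finset ℕ) := by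
      rw [Finset.disjoint_left]; intro a ha hb
      simp [Finset.mem_Icc] at ha hb; omega
    rw [he, gam_union _ _ hd, ih]
    have h1 : (2 * m + 1) % 2 = 1 := by omega
    have h2 : (2 * m + 2) % 2 = 0 := by omega
    simp [gam, Finset.filter_insert, Finset.filter_singleton, h1, h2]

lemma gam_sdiff (S X : Finset ℕ) (h : X ⊆ S) : gam (S \ X) = gam S - gam X := by
  have : S = (S \ X) ∪ X := by
    rw [Finset.sdiff_union_self_eq_union, Finset.union_eq_left.2 h]
  have h2 : gam S = gam (S \ X) + gam X := by
    conv_lhs => rw [this]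
    exact gam_union _ _ Finset.sdiff_disjoint
  linarith

/-- for odd `D ≥ 1`, `N = D+2`, the map `X ↦ X Δ [1,D+1]`
is a fixed-point-free involution of `E_N` (the even-cardinality subsets of
`[1,N]`), preserves membership of `N`, and maps
`{X ∈ E_N : N ∉ X, γ(X) = t}` bijectively onto `{X ∈ E_N : N ∉ X, γ(X) = −t}`
for every even integer `t`. -/
theorem stmt11 (D N : ℕ) (hD : Odd D) (h1 : 1 ≤ D) (hN : N = D + 2) :
    (∀ X : Finset ℕ, X ⊆ Finset.Icc 1 N → Even X.card →
      (symmDiff X (Finset.Icc 1 (D + 1)) ⊆ Finset.Icc 1 N ∧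
       Even (symmDiff X (Finset.Icc 1 (D + 1))).card ∧
       symmDiff X (Finset.Icc 1 (D + 1)) ≠ X ∧
       symmDiff (symmDiff X (Finset.Icc 1 (D + 1))) (Finset.Icc 1 (D + 1)) = X ∧
       (N ∈ symmDiff X (Finset.Icc 1 (D + 1)) ↔ N ∈ X))) ∧
    (∀ t : ℤ, Even t →
      Set.BijOn (fun X => symmDiff X (Finset.Icc 1 (D + 1)))
        {X : Finset ℕ | X ⊆ Finset.Icc 1 N ∧ Even X.card ∧ N ∉ X ∧ gam X = t}
        {X : Finset ℕ | X ⊆ Finset.Icc 1 N ∧ Even X.card ∧ N ∉ X ∧ gam X = -t}) := by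
  
  subst hN
  set S := Finset.Icc 1 (D + 1) with hS
  have hScard : S.card = D + 1 := by simp [hS]
  have hSEven : Even S.card := by rw [hScard]; exact hD.add_one
  have hSsub : S ⊆ Finset.Icc 1 (D + 2) := Finset.Icc_subset_Icc_right (by omega)
  have hNS : D + 2 ∉ S := by simp [hS, Finset.mem_Icc]
  have hgamS : gam S = 0 := by
    obtain ⟨k, hk⟩ := hD
    have h2 : D + 1 = 2 * (k + 1) := by omega
    rw [hS, h2]; exact gam_Icc (k + 1)
  have hone : (1 : ℕ) ∈ S := by simp [hS, Finset.mem_Icc]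
  have hmap : ∀ t : ℤ, Set.MapsTo (fun X => symmDiff X S)
      {X : Finset ℕ | X ⊆ Finset.Icc 1 (D + 2) ∧ Even X.card ∧ D + 2 ∉ X ∧ gam X = t}
      {X : Finset ℕ | X ⊆ Finset.Icc 1 (D + 2) ∧ Even X.card ∧ D + 2 ∉ X ∧ gam X = -t} := by
    intro t X hX
    obtain ⟨hsub, heven, hnmem, hgam⟩ := hX
    have hXS : X ⊆ S := by
      intro x hx
      have h3 := hsub hx
      simp only [hS, Finset.mem_Icc] at h3 ⊢
      have : x ≠ D + 2 := fun h => hnmem (h ▸ hx)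
      omega
    have hEq : symmDiff X S = S \ X := symmDiff_of_le hXS
    simp only [Set.mem_setOf_eq, hEq]
    refine ⟨(Finset.sdiff_subset).trans hSsub, ?_, fun h => hNS (Finset.sdiff_subset h), ?_⟩
    · rw [Finset.card_sdiff_of_subset hXS, hScard]
      obtain ⟨a, ha⟩ := heven
      have hle : X.card ≤ D + 1 := hScard ▸ Finset.card_le_card hXS
      obtain ⟨b, hb⟩ : Even (D + 1) := hScard ▸ hSEven
      exact ⟨b - a, by omega⟩
    · rw [gam_sdiff S X hXS, hgamS, hgam]; ring
  constructor
  · intro X hsub heven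
    refine ⟨?_, ?_, ?_, symmDiff_symmDiff_cancel_right _ _, ?_⟩
    · exact (symmDiff_le_sup : symmDiff X S ≤ X ⊔ S).trans (Finset.union_subset hsub hSsub)
    · have hu : symmDiff X S = (X \ S) ∪ (S \ X) := by
        ext x; simp [Finset.mem_symmDiff]
      have e1 := Finset.card_sdiff_add_card_inter X S
      have e2 := Finset.card_sdiff_add_card_inter S X
      rw [Finset.inter_comm] at e2
      rw [hu, Finset.card_union_of_disjoint disjoint_sdiff_sdiff]
      obtain ⟨a, ha⟩ := heven
      obtain ⟨b, hb⟩ := hSEven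
      exact ⟨(X \ S).card + (S \ X).card - (a + b - (X ∩ S).card), by omega⟩
    · intro hEqX
      have := symmDiff_eq_left.mp hEqX
      rw [this] at hone
      simp at hone
    · simp only [Finset.mem_symmDiff]
      constructor
      · rintro (⟨h, _⟩ | ⟨h, _⟩)
        · exact h
        · exact absurd h hNS
      · intro h
        exact Or.inl ⟨h, hNS⟩
  · intro t _
    refine ⟨hmap t, ?_, ?_⟩
    · intro X _ Y _ hEq
      have := congrArg (fun Z => symmDiff Z S) hEq
      simpa [symmDiff_symmDiff_cancel_right] using this
    · intro Y hY
      refine ⟨symmDiff Y S, ?_, symmDiff_symmDiff_cancel_right _ _⟩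
      have := hmap (-t) hY
      rwa [neg_neg] at this
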